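/- Let (Q₀,…,Q_t) be an algebraic relation of degree d satisfied by an integral polynomial progression (x, x+P₁(y), …, x+P_t(y)), and write Qᵢ(u) = Σ_{k=0}^{d} b_{ik} binom(u,k). Then the relation is a sum of homogeneous algebraic relations if and only if for every 0 ≤ k ≤ d and 0 ≤ j ≤ k, b_{0k} binom(x,j) + b_{1k} binom(x+P₁(y),j) + … + b_{tk} binom(x+P_t(y),j) = 0 as a polynomial in ℝ[x,y], if and only if for every 0 ≤ k ≤ d and 0 ≤ j ≤ k, b_{0k} x^j + b_{1k}(x+P₁(y))^j + … + b_{tk}(x+P_t(y))^j = 0. -/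

import Mathlib

open Polynomial

/-- The binomial coefficient polynomial `binom(u,k) = u(u-1)⋯(u-k+1)/k!` in `ℝ[u]`. -/
noncomputable def binomPoly (k : ℕ) : Polynomial ℝ :=
  ((k.factorial : ℝ)⁻¹) • descPochhammer ℝ k

/-- The extended progression polynomials: `Pe 0 = 0` (the `x` term) and `Pe i.succ = P i`. -/
noncomputable def Pe (t : ℕ) (P : Fin t → Polynomial ℝ) : Fin (t + 1) → Polynomial ℝ :=
  Fin.cases 0 P

/-- `(Q₀, …, Q_t)` is an algebraic relation satisfied by `(x, x+P₁(y), …, x+P_t(y))`. -/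
def IsRelation (t : ℕ) (P : Fin t → Polynomial ℝ) (Q : Fin (t + 1) → Polynomial ℝ) : Prop :=
  ∑ i : Fin (t + 1), aeval ((X : Polynomial (Polynomial ℝ)) + C (Pe t P i)) (Q i) = 0

/-- A homogeneous algebraic relation: one of the form `(a₀u^d, …, a_t u^d)`. -/
def IsHomRelation (t : ℕ) (P : Fin t → Polynomial ℝ)
    (Q : Fin (t + 1) → Polynomial ℝ) : Prop :=
  IsRelation t P Q ∧ ∃ (d : ℕ) (a : Fin (t + 1) → ℝ), ∀ i, Q i = C (a i) * X ^ d

/-! ### Auxiliary material -/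

/-- The forward difference operator `ΔR(u) = R(u+1) - R(u)` as a linear endomorphism. -/
noncomputable def fd : Module.End ℝ (Polynomial ℝ) :=
  (aeval (X + 1 : Polynomial ℝ)).toLinearMap - LinearMap.id

lemma fd_apply (p : Polynomial ℝ) : fd p = p.comp (X + 1) - p := by
  simp [fd, ← comp_eq_aeval]

lemma binomPoly_zero : binomPoly 0 = 1 := by
  simp [binomPoly]

lemma fd_binomPoly_zero : fd (binomPoly 0) = 0 := by
  rw [binomPoly_zero, fd_apply, one_comp, sub_self]

lemma descPoch_comp (k : ℕ) :
    (descPochhammer ℝ (k+1)).comp (X + 1) = (X + 1) * descPochhammer ℝ k := by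
  rw [descPochhammer_succ_left, mul_comp, X_comp, comp_assoc, sub_comp, X_comp, one_comp,
    add_sub_cancel_right, comp_X]

lemma fd_binomPoly_succ (k : ℕ) : fd (binomPoly (k+1)) = binomPoly k := by
  rw [binomPoly, binomPoly, map_smul, fd_apply, descPoch_comp, descPochhammer_succ_right]
  rw [smul_eq_C_mul, smul_eq_C_mul]
  have h1 : (X + 1) * descPochhammer ℝ k - descPochhammer ℝ k * (X - (k : Polynomial ℝ)) =
      ((k : Polynomial ℝ) + 1) * descPochhammer ℝ k := by ring
  rw [h1, ← mul_assoc]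
  congr 1
  have hc : ((k : Polynomial ℝ) + 1) = C ((k : ℝ) + 1) := by
    rw [C_add, C_1, C_eq_natCast]
  rw [hc, ← C_mul]
  congr 1
  rw [Nat.factorial_succ]
  have hk : (k.factorial : ℝ) ≠ 0 := Nat.cast_ne_zero.mpr k.factorial_ne_zero
  push_cast
  field_simp

lemma fd_pow_binomPoly (m k : ℕ) :
    (fd ^ m) (binomPoly k) = if m ≤ k then binomPoly (k - m) else 0 := by
  induction m generalizing k with
  | zero => simp
  | succ m ih =>
    rw [pow_succ, Module.End.mul_apply]
    cases k with
    | zero => rw [fd_binomPoly_zero, map_zero]; simp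
    | succ k => rw [fd_binomPoly_succ, ih]; simp [Nat.succ_le_succ_iff, Nat.succ_sub_succ]

/-- The coefficient of `binomPoly m` in the binomial-basis expansion, as a linear functional. -/
noncomputable def binomCoeff (m : ℕ) : Polynomial ℝ →ₗ[ℝ] ℝ :=
  (leval 0) ∘ₗ (fd ^ m : Module.End ℝ (Polynomial ℝ))

lemma binomPoly_eval_zero (k : ℕ) : (binomPoly k).eval 0 = if k = 0 then 1 else 0 := by
  simp [binomPoly, descPochhammer_eval_zero]
  split <;> simp_all [Nat.factorial]

lemma binomCoeff_binomPoly (m k : ℕ) :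
    binomCoeff m (binomPoly k) = if m = k then 1 else 0 := by
  simp only [binomCoeff, LinearMap.comp_apply, fd_pow_binomPoly, leval_apply]
  rcases le_or_gt m k with h | h
  · rw [if_pos h, binomPoly_eval_zero]
    have : k - m = 0 ↔ m = k := by omega
    simp [this]
  · rw [if_neg (by omega), if_neg (by omega), eval_zero]

lemma binomPoly_natDegree_le (k : ℕ) : (binomPoly k).natDegree ≤ k := by
  refine (natDegree_smul_le _ _).trans ?_
  rw [descPochhammer_natDegree]

lemma binomPoly_coeff_self (k : ℕ) : (binomPoly k).coeff k = (k.factorial : ℝ)⁻¹ := by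
  rw [binomPoly, coeff_smul]
  have h := (monic_descPochhammer ℝ k).coeff_natDegree
  rw [descPochhammer_natDegree] at h
  rw [h, smul_eq_mul, mul_one]

lemma mem_span_binomPoly (n : ℕ) :
    ∀ R : Polynomial ℝ, R.natDegree ≤ n → R ∈ Submodule.span ℝ (binomPoly '' Set.Iic n) := by
  induction n with
  | zero =>
    intro R hR
    obtain ⟨a, rfl⟩ := natDegree_eq_zero.mp (Nat.le_zero.mp hR)
    have : C a = a • binomPoly 0 := by rw [binomPoly]; simp [smul_smul, smul_eq_C_mul]
    rw [this]
    exact Submodule.smul_mem _ _ (Submodule.subset_span ⟨0, Set.mem_Iic.mpr le_rfl, rfl⟩)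
  | succ n ih =>
    intro R hR
    set c : ℝ := R.coeff (n+1) * ((n+1).factorial : ℝ) with hc
    have hmem : binomPoly (n+1) ∈ Submodule.span ℝ (binomPoly '' Set.Iic (n+1)) :=
      Submodule.subset_span ⟨n+1, Set.mem_Iic.mpr le_rfl, rfl⟩
    have hfac : (((n+1).factorial : ℝ)) ≠ 0 := Nat.cast_ne_zero.mpr (Nat.factorial_ne_zero _)
    have hR' : (R - c • binomPoly (n+1)).natDegree ≤ n := by
      rw [natDegree_le_iff_coeff_eq_zero]
      intro m hm
      rw [coeff_sub, coeff_smul]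
      rcases eq_or_lt_of_le (Nat.succ_le_of_lt hm) with h | h
      · rw [← h, binomPoly_coeff_self, hc, smul_eq_mul]
        field_simp
        simp
      · rw [coeff_eq_zero_of_natDegree_lt (lt_of_le_of_lt hR h),
          coeff_eq_zero_of_natDegree_lt (lt_of_le_of_lt (binomPoly_natDegree_le _) h)]
        simp
    have hsub : Submodule.span ℝ (binomPoly '' Set.Iic n) ≤
        Submodule.span ℝ (binomPoly '' Set.Iic (n+1)) :=
      Submodule.span_mono (Set.image_mono (Set.Iic_subset_Iic.mpr (Nat.le_succ n)))
    have hsum : R = (R - c • binomPoly (n+1)) + c • binomPoly (n+1) := by ring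
    rw [hsum]
    exact Submodule.add_mem _ (hsub (ih _ hR')) (Submodule.smul_mem _ _ hmem)

lemma binomPoly_mem_span_pow (n j : ℕ) (hj : j ≤ n) :
    binomPoly j ∈ Submodule.span ℝ ((fun m => (X : Polynomial ℝ) ^ m) '' Set.Iic n) := by
  classical
  have h1 : binomPoly j ∈ degreeLE ℝ (n : WithBot ℕ) := by
    rw [mem_degreeLE]
    refine degree_le_natDegree.trans ?_
    exact_mod_cast (binomPoly_natDegree_le j).trans hj
  rw [degreeLE_eq_span_X_pow] at h1
  refine Submodule.span_mono ?_ h1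
  intro p hp
  simp only [Finset.coe_image, Set.mem_image, Finset.mem_coe, Finset.mem_range] at hp
  obtain ⟨m, hm, rfl⟩ := hp
  exact ⟨m, Set.mem_Iic.mpr (Nat.lt_succ_iff.mp hm), rfl⟩

section
variable {A : Type*} [CommRing A] [Algebra ℝ A] {s : ℕ}

noncomputable def Lmap (v : Fin s → ℝ) (S : Fin s → A) : Polynomial ℝ →ₗ[ℝ] A :=
  ∑ i, v i • ((aeval (S i)).toLinearMap : Polynomial ℝ →ₗ[ℝ] A)

lemma Lmap_apply (v : Fin s → ℝ) (S : Fin s → A) (R : Polynomial ℝ) :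
    Lmap v S R = ∑ i, v i • aeval (S i) R := by
  simp [Lmap]

lemma vanish_span {L : Polynomial ℝ →ₗ[ℝ] A} {st : Set (Polynomial ℝ)}
    (h : ∀ p ∈ st, L p = 0) : ∀ q ∈ Submodule.span ℝ st, L q = 0 := by
  intro q hq
  have : Submodule.span ℝ st ≤ LinearMap.ker L := Submodule.span_le.mpr h
  exact this hq

lemma binom_iff_pow (v : Fin s → ℝ) (S : Fin s → A) (n : ℕ) :
    (∀ j ≤ n, ∑ i, v i • aeval (S i) (binomPoly j) = 0) ↔
      (∀ j ≤ n, ∑ i, v i • (S i) ^ j = 0) := by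
  constructor
  · intro h j hj
    have hv : ∀ p ∈ binomPoly '' Set.Iic n, Lmap v S p = 0 := by
      rintro p ⟨m, hm, rfl⟩
      rw [Lmap_apply]; exact h m hm
    have := vanish_span hv _ (mem_span_binomPoly n (X ^ j) (by simp [natDegree_X_pow, hj]))
    rw [Lmap_apply] at this
    simpa using this
  · intro h j hj
    have hv : ∀ p ∈ (fun m => (X : Polynomial ℝ) ^ m) '' Set.Iic n, Lmap v S p = 0 := by
      rintro p ⟨m, hm, rfl⟩
      rw [Lmap_apply]
      simpa using h m hm
    have := vanish_span hv _ (binomPoly_mem_span_pow n j hj)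
    rw [Lmap_apply] at this
    exact this
end

lemma relation_propagate {s : ℕ} (v : Fin s → ℝ) (p : Fin s → Polynomial ℝ) (n : ℕ)
    (h : ∑ i, v i • ((X : Polynomial (Polynomial ℝ)) + C (p i)) ^ n = 0) :
    ∀ j ≤ n, ∑ i, v i • ((X : Polynomial (Polynomial ℝ)) + C (p i)) ^ j = 0 := by
  have key : ∀ m ≤ n, ∑ i, v i • (p i) ^ m = 0 := by
    intro m hm
    have hco := congrArg (fun q => Polynomial.coeff q (n - m)) h
    simp only [finset_sum_coeff, coeff_smul, coeff_X_add_C_pow, coeff_zero] at hco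
    have hnm : n - (n - m) = m := by omega
    rw [show (∑ i, v i • ((p i) ^ (n - (n-m)) * (n.choose (n-m) : Polynomial ℝ))) =
        (∑ i, v i • (p i) ^ m) * (n.choose (n-m) : Polynomial ℝ) by
      rw [Finset.sum_mul]; congr 1; ext i; rw [hnm, smul_mul_assoc]] at hco
    have hchoose : ((n.choose (n-m) : Polynomial ℝ)) ≠ 0 := by
      exact_mod_cast Nat.cast_ne_zero.mpr (Nat.choose_pos (by omega : n - m ≤ n)).ne'
    rcases mul_eq_zero.mp hco with h1 | h1
    · exact h1
    · exact absurd h1 hchoose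
  intro j hj
  refine Polynomial.ext fun k => ?_
  simp only [finset_sum_coeff, coeff_smul, coeff_X_add_C_pow, coeff_zero]
  rw [show (∑ i, v i • ((p i) ^ (j - k) * (j.choose k : Polynomial ℝ))) =
      (∑ i, v i • (p i) ^ (j - k)) * (j.choose k : Polynomial ℝ) by
    rw [Finset.sum_mul]; congr 1; ext i; rw [smul_mul_assoc]]
  rcases le_or_gt k j with hk | hk
  · rw [key (j - k) (by omega), zero_mul]
  · rw [Nat.choose_eq_zero_of_lt hk]; simp

/-- Evaluating a homogeneous tuple term. -/
lemma aeval_hom_term (z : Polynomial (Polynomial ℝ)) (a : ℝ) (d : ℕ) :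
    aeval z (C a * X ^ d) = a • z ^ d := by
  rw [map_mul, aeval_C, map_pow, aeval_X, Algebra.smul_def]

/-- `binomCoeff k (X ^ d') = 0` when `d' < k`. -/
lemma binomCoeff_X_pow_eq_zero {k d' : ℕ} (h : d' < k) : binomCoeff k (X ^ d') = 0 := by
  have hmem := mem_span_binomPoly d' (X ^ d') (by simp)
  refine vanish_span (L := binomCoeff k) ?_ _ hmem
  rintro p ⟨m, hm, rfl⟩
  have hm' : m ≤ d' := hm
  rw [binomCoeff_binomPoly, if_neg (by omega : ¬ k = m)]

set_option maxHeartbeats 1000000 in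
theorem stmt12 (t : ℕ) (ht : 0 < t) (P : Fin t → Polynomial ℝ)
    (hint : ∀ i, (∀ n : ℤ, ∃ m : ℤ, (P i).eval (n : ℝ) = m) ∧ (P i).eval 0 = 0)
    (hinj : Function.Injective P)
    (d : ℕ) (b : Fin (t + 1) → ℕ → ℝ) (Q : Fin (t + 1) → Polynomial ℝ)
    (hQ : ∀ i, Q i = ∑ k ∈ Finset.range (d + 1), C (b i k) * binomPoly k)
    (hrel : IsRelation t P Q) :
    (Q ∈ Submodule.span ℝ {Q' | IsHomRelation t P Q'} ↔
      (∀ k ≤ d, ∀ j ≤ k, ∑ i : Fin (t + 1),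
        b i k • aeval ((X : Polynomial (Polynomial ℝ)) + C (Pe t P i)) (binomPoly j) = 0)) ∧
    ((∀ k ≤ d, ∀ j ≤ k, ∑ i : Fin (t + 1),
        b i k • aeval ((X : Polynomial (Polynomial ℝ)) + C (Pe t P i)) (binomPoly j) = 0) ↔
      (∀ k ≤ d, ∀ j ≤ k, ∑ i : Fin (t + 1),
        b i k • ((X : Polynomial (Polynomial ℝ)) + C (Pe t P i)) ^ j = 0)) := by
  set S : Fin (t + 1) → Polynomial (Polynomial ℝ) :=
    fun i => (X : Polynomial (Polynomial ℝ)) + C (Pe t P i) with hS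
  -- the binomCoeff of Q recovers b
  have hbQ : ∀ i, ∀ k ≤ d, binomCoeff k (Q i) = b i k := by
    intro i k hk
    rw [hQ i, map_sum]
    rw [Finset.sum_eq_single k]
    · rw [← smul_eq_C_mul, map_smul, binomCoeff_binomPoly, if_pos rfl, smul_eq_mul, mul_one]
    · intro m _ hm
      rw [← smul_eq_C_mul, map_smul, binomCoeff_binomPoly, if_neg (Ne.symm hm), smul_zero]
    · intro hmem
      exact absurd (Finset.mem_range.mpr (by omega)) hmem
  have part2 : (∀ k ≤ d, ∀ j ≤ k, ∑ i : Fin (t + 1),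
        b i k • aeval (S i) (binomPoly j) = 0) ↔
      (∀ k ≤ d, ∀ j ≤ k, ∑ i : Fin (t + 1), b i k • (S i) ^ j = 0) := by
    constructor
    · intro h k hk
      exact (binom_iff_pow (fun i => b i k) S k).mp (fun j hj => h k hk j hj)
    · intro h k hk
      exact (binom_iff_pow (fun i => b i k) S k).mpr (fun j hj => h k hk j hj)
  refine ⟨?_, part2⟩
  constructor
  · -- span → binomial conditions
    intro hspan
    have key : ∀ k, ∀ j ≤ k, ∑ i, (binomCoeff k (Q i)) • aeval (S i) (binomPoly j) = 0 := by
      clear hrel hQ hbQ part2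
      induction hspan using Submodule.span_induction with
      | mem Q' hQ' =>
        obtain ⟨hrelQ', d', a, ha⟩ := hQ'
        intro k j hj
        have hterm : ∀ i, binomCoeff k (Q' i) = a i * binomCoeff k ((X : Polynomial ℝ) ^ d') := by
          intro i
          rw [ha i, ← smul_eq_C_mul, map_smul, smul_eq_mul]
        rcases le_or_gt k d' with hkd | hkd
        · have hrel0 : ∑ i, a i • (S i) ^ d' = 0 := by
            have hthis := hrelQ'
            unfold IsRelation at hthis
            calc ∑ i, a i • (S i) ^ d'
                = ∑ i : Fin (t+1), aeval (S i) (Q' i) := by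
                  refine Finset.sum_congr rfl fun i _ => ?_
                  rw [ha i, aeval_hom_term]
              _ = 0 := hthis
          have hpows := relation_propagate a (Pe t P) d' hrel0
          have hbinom := (binom_iff_pow a S d').mpr hpows
          have hzero := hbinom j (hj.trans hkd)
          calc ∑ i, (binomCoeff k (Q' i)) • aeval (S i) (binomPoly j)
              = binomCoeff k ((X : Polynomial ℝ) ^ d') •
                  ∑ i, a i • aeval (S i) (binomPoly j) := by
                rw [Finset.smul_sum]
                refine Finset.sum_congr rfl fun i _ => ?_
                rw [hterm i, mul_comm, mul_smul]
            _ = 0 := by rw [hzero, smul_zero]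
        · have hz : ∀ i, binomCoeff k (Q' i) = 0 := by
            intro i
            rw [hterm i, binomCoeff_X_pow_eq_zero hkd, mul_zero]
          simp [hz]
      | zero => intro k j hj; simp
      | add Q1 Q2 _ _ h1 h2 =>
        intro k j hj
        have hsum := congrArg₂ (· + ·) (h1 k j hj) (h2 k j hj)
        simp only [add_zero] at hsum
        rw [← hsum, ← Finset.sum_add_distrib]
        refine Finset.sum_congr rfl fun i _ => ?_
        rw [Pi.add_apply, map_add, add_smul]
      | smul a Q1 _ h1 =>
        intro k j hj
        have hsm := congrArg (a • ·) (h1 k j hj)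
        simp only [smul_zero] at hsm
        rw [← hsm, Finset.smul_sum]
        refine Finset.sum_congr rfl fun i _ => ?_
        rw [Pi.smul_apply, map_smul, smul_eq_mul, mul_smul]
    intro k hk j hj
    have := key k j hj
    refine Eq.trans ?_ this
    refine Finset.sum_congr rfl fun i _ => ?_
    rw [hbQ i k hk]
  · -- binomial conditions → span
    intro hA
    have hB : ∀ k ≤ d, ∀ m ≤ k, ∑ i, b i k • (S i) ^ m = 0 :=
      part2.mp hA
    classical
    set c : ℕ → ℕ → ℝ := fun k m => (binomPoly k).coeff m with hcdef
    set Rq : ℕ → ℕ → (Fin (t+1) → Polynomial ℝ) :=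
      fun k m => fun i => C (b i k * c k m) * X ^ m with hRq
    have hhom : ∀ k ≤ d, ∀ m ≤ k, IsHomRelation t P (Rq k m) := by
      intro k hk m hm
      refine ⟨?_, m, fun i => b i k * c k m, fun i => rfl⟩
      unfold IsRelation
      calc ∑ i : Fin (t+1), aeval (S i) (Rq k m i)
          = ∑ i, (b i k * c k m) • (S i) ^ m := by
            refine Finset.sum_congr rfl fun i _ => ?_
            rw [hRq, aeval_hom_term]
        _ = c k m • ∑ i, b i k • (S i) ^ m := by
            rw [Finset.smul_sum]
            refine Finset.sum_congr rfl fun i _ => ?_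
            rw [mul_comm, mul_smul]
        _ = 0 := by rw [hB k hk m hm, smul_zero]
    have hQsum : Q = ∑ k ∈ Finset.range (d+1), ∑ m ∈ Finset.range (k+1), Rq k m := by
      funext i
      rw [hQ i, Finset.sum_apply]
      refine Finset.sum_congr rfl fun k _ => ?_
      rw [Finset.sum_apply]
      have hexp : binomPoly k = ∑ m ∈ Finset.range (k+1), C (c k m) * X ^ m := by
        conv_lhs => rw [(binomPoly k).as_sum_range' (k+1)
          (Nat.lt_succ_of_le (binomPoly_natDegree_le k))]
        exact Finset.sum_congr rfl fun m _ => (C_mul_X_pow_eq_monomial).symm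
      rw [hexp, Finset.mul_sum]
      refine Finset.sum_congr rfl fun m _ => ?_
      rw [hRq, ← mul_assoc, ← C_mul]
    rw [hQsum]
    refine Submodule.sum_mem _ fun k hk => Submodule.sum_mem _ fun m hm => ?_
    exact Submodule.subset_span
      (hhom k (Nat.lt_succ_iff.mp (Finset.mem_range.mp hk))
        m (Nat.lt_succ_iff.mp (Finset.mem_range.mp hm)))
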